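/- Distributional symmetry of the antithetic estimator: in the antithetic setup (with 𝒫_h, μ_h, σ_{h,j} and (ℒ^{j₁}σ_{j₂})_h arbitrary measurable maps ℝ^d → ℝ^d for each step size h > 0), for every N ∈ ℕ and every 0 ≤ n ≤ N the pair of random vectors (Y^f_n, Y^c_n) is identically distributed with the pair (Y^a_n, Y^c_n). In particular, for every bounded measurable φ : ℝ^d → ℝ, E[φ(Y^f_n)] = E[φ(Y^a_n)], so the telescoping identity E[(φ(Y^f_N)+φ(Y^a_N))/2] = E[φ(Y^f_N)] required by the antithetic MLMC method holds. -/

import Mathlib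

open MeasureTheory ProbabilityTheory
open scoped ENNReal

/-- Euclidean space `ℝ^d`. -/
abbrev Euc (d : ℕ) : Type := EuclideanSpace ℝ (Fin d)

/-- One step of the modified Milstein scheme without Lévy areas: the maps
`P`, `μh`, `σh`, `Lh` are the (already step-size-specialized) projection and
modified coefficients, `h` is the length of the step and `ξ` the vector of
Brownian increments over the step. -/
noncomputable def mmStep {V : Type} [AddCommGroup V] [Module ℝ V] {m : ℕ}
    (P μh : V → V) (σh : Fin m → V → V) (Lh : Fin m → Fin m → V → V)
    (h : ℝ) (ξ : Fin m → ℝ) (y : V) : V :=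
  P y + h • μh (P y) + (∑ j, ξ j • σh j (P y))
    + ∑ j₁, ∑ j₂, ((ξ j₁ * ξ j₂ - (if j₁ = j₂ then h else 0)) / 2) • Lh j₁ j₂ (P y)

/-- generic driven recursion -/
def chain {V ι : Type} (step : ℕ → (ι → ℝ) → V → V) : ℕ → V → (ι → ℝ) → V
  | 0, x, _ => x
  | n + 1, x, w => step n w (chain step n x w)

lemma chain_measurable {V ι : Type} [MeasurableSpace V]
    {step : ℕ → (ι → ℝ) → V → V}
    (hstep : ∀ n, Measurable fun p : (ι → ℝ) × V => step n p.1 p.2) :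
    ∀ n, Measurable fun p : V × (ι → ℝ) => chain step n p.1 p.2 := by
  intro n
  induction n with
  | zero => exact measurable_fst
  | succ n ih =>
    have : (fun p : V × (ι → ℝ) => chain step (n + 1) p.1 p.2)
        = fun p : V × (ι → ℝ) => step n p.2 (chain step n p.1 p.2) := rfl
    rw [this]
    exact (hstep n).comp (measurable_snd.prodMk ih)

lemma measurable_mmStep {d m : ℕ} {α : Type} [MeasurableSpace α]
    {P μh : Euc d → Euc d} {σh : Fin m → Euc d → Euc d} {Lh : Fin m → Fin m → Euc d → Euc d}
    (hP : Measurable P) (hμ : Measurable μh) (hσ : ∀ j, Measurable (σh j))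
    (hL : ∀ j₁ j₂, Measurable (Lh j₁ j₂)) (h : ℝ)
    {ξ : α → Fin m → ℝ} {y : α → Euc d} (hξ : Measurable ξ) (hy : Measurable y) :
    Measurable (fun a => mmStep P μh σh Lh h (ξ a) (y a)) := by
  have hPy : Measurable fun a => P (y a) := hP.comp hy
  unfold mmStep
  refine (((hPy.add ((hμ.comp hPy).const_smul h)).add ?_).add ?_)
  · exact Finset.measurable_sum _ fun j _ =>
      ((measurable_pi_apply j).comp hξ).smul ((hσ j).comp hPy)
  · refine Finset.measurable_sum _ fun j₁ _ => Finset.measurable_sum _ fun j₂ _ => ?_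
    exact ((((measurable_pi_apply j₁).comp hξ).mul
      ((measurable_pi_apply j₂).comp hξ)).sub measurable_const).div_const 2
      |>.smul ((hL j₁ j₂).comp hPy)

/-- joint law of an independent family with common law is the product measure -/
lemma map_joint_eq_pi {ι Ω : Type} [Fintype ι] [MeasurableSpace Ω]
    {Pr : Measure Ω} [IsProbabilityMeasure Pr]
    {f : ι → Ω → ℝ} (hf : ∀ i, Measurable (f i))
    (hind : iIndepFun f Pr)
    {ν : Measure ℝ} [IsProbabilityMeasure ν]
    (hν : ∀ i, Measure.map (f i) Pr = ν) :
    Measure.map (fun ω i => f i ω) Pr = Measure.pi (fun _ => ν) := by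
  refine (Measure.pi_eq fun s hs => ?_).symm
  rw [Measure.map_apply (measurable_pi_iff.2 hf) (MeasurableSet.univ_pi hs)]
  have hpre : (fun ω i => f i ω) ⁻¹' Set.pi Set.univ s = ⋂ i, f i ⁻¹' s i := by
    ext ω; simp [Set.mem_pi]
  rw [hpre]
  calc Pr (⋂ i, f i ⁻¹' s i) = ∏ i, Pr (f i ⁻¹' s i) := by
        have h2 := hind.measure_inter_preimage_eq_mul (S := Finset.univ)
          (sets := s) (fun i _ => hs i)
        simpa using h2
    _ = ∏ i, ν (s i) := Finset.prod_congr rfl fun i _ => by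
        rw [← hν i, Measure.map_apply (hf i) (hs i)]

/-- precomposition with a self-equivalence preserves an iid product measure -/
lemma map_comp_equiv_pi {ι : Type} [Fintype ι] (e : ι ≃ ι) (ν : Measure ℝ)
    [IsProbabilityMeasure ν] :
    Measure.map (fun (w : ι → ℝ) i => w (e i)) (Measure.pi fun _ => ν)
      = Measure.pi fun _ => ν := by
  have hg : Measurable fun (w : ι → ℝ) i => w (e i) :=
    measurable_pi_iff.2 fun i => measurable_pi_apply _
  refine (Measure.pi_eq fun s hs => ?_).symm
  rw [Measure.map_apply hg (MeasurableSet.univ_pi hs)]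
  have hpre : (fun (w : ι → ℝ) i => w (e i)) ⁻¹' Set.pi Set.univ s
      = Set.pi Set.univ fun j => s (e.symm j) := by
    ext w
    simp only [Set.mem_preimage, Set.mem_pi, Set.mem_univ, true_implies]
    exact ⟨fun h j => by simpa using h (e.symm j), fun h i => by simpa using h (e i)⟩
  rw [hpre, Measure.pi_pi]
  exact Equiv.prod_comp e.symm fun i => ν (s i)

def flipBool (m N : ℕ) : (Fin m × Fin N × Bool) ≃ (Fin m × Fin N × Bool) where
  toFun q := (q.1, q.2.1, !q.2.2)
  invFun q := (q.1, q.2.1, !q.2.2)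
  left_inv q := by simp
  right_inv q := by simp

noncomputable def stepC {d m : ℕ} (N : ℕ) (P μh : Euc d → Euc d)
    (σh : Fin m → Euc d → Euc d) (Lh : Fin m → Fin m → Euc d → Euc d) (h : ℝ)
    (n : ℕ) (w : Fin m × Fin N × Bool → ℝ) (y : Euc d) : Euc d :=
  if hn : n < N then
    mmStep P μh σh Lh h (fun j => w (j, ⟨n, hn⟩, false) + w (j, ⟨n, hn⟩, true)) y
  else y

noncomputable def stepHalf {d m : ℕ} (N : ℕ) (P μh : Euc d → Euc d)
    (σh : Fin m → Euc d → Euc d) (Lh : Fin m → Fin m → Euc d → Euc d) (h : ℝ) (b : Bool)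
    (n : ℕ) (w : Fin m × Fin N × Bool → ℝ) (y : Euc d) : Euc d :=
  if hn : n < N then mmStep P μh σh Lh h (fun j => w (j, ⟨n, hn⟩, b)) y else y

noncomputable def stepF {d m : ℕ} (N : ℕ) (P μh : Euc d → Euc d)
    (σh : Fin m → Euc d → Euc d) (Lh : Fin m → Fin m → Euc d → Euc d) (h : ℝ)
    (n : ℕ) (w : Fin m × Fin N × Bool → ℝ) (y : Euc d) : Euc d :=
  stepHalf N P μh σh Lh h true n w (stepHalf N P μh σh Lh h false n w y)

lemma measurable_stepHalf {d m : ℕ} (N : ℕ) {P μh : Euc d → Euc d}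
    {σh : Fin m → Euc d → Euc d} {Lh : Fin m → Fin m → Euc d → Euc d}
    (hP : Measurable P) (hμ : Measurable μh) (hσ : ∀ j, Measurable (σh j))
    (hL : ∀ j₁ j₂, Measurable (Lh j₁ j₂)) (h : ℝ) (b : Bool) (n : ℕ) :
    Measurable fun p : ((Fin m × Fin N × Bool) → ℝ) × Euc d =>
      stepHalf N P μh σh Lh h b n p.1 p.2 := by
  unfold stepHalf
  by_cases hn : n < N
  · simp only [dif_pos hn]
    exact measurable_mmStep hP hμ hσ hL h
      (measurable_pi_iff.2 fun j => (measurable_pi_apply _).comp measurable_fst)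
      measurable_snd
  · simp only [dif_neg hn]; exact measurable_snd

lemma measurable_stepC {d m : ℕ} (N : ℕ) {P μh : Euc d → Euc d}
    {σh : Fin m → Euc d → Euc d} {Lh : Fin m → Fin m → Euc d → Euc d}
    (hP : Measurable P) (hμ : Measurable μh) (hσ : ∀ j, Measurable (σh j))
    (hL : ∀ j₁ j₂, Measurable (Lh j₁ j₂)) (h : ℝ) (n : ℕ) :
    Measurable fun p : ((Fin m × Fin N × Bool) → ℝ) × Euc d =>
      stepC N P μh σh Lh h n p.1 p.2 := by
  unfold stepC
  by_cases hn : n < N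
  · simp only [dif_pos hn]
    refine measurable_mmStep hP hμ hσ hL h ?_ measurable_snd
    exact measurable_pi_iff.2 fun j =>
      ((measurable_pi_apply _).comp measurable_fst).add
        ((measurable_pi_apply _).comp measurable_fst)
  · simp only [dif_neg hn]; exact measurable_snd

lemma measurable_stepF {d m : ℕ} (N : ℕ) {P μh : Euc d → Euc d}
    {σh : Fin m → Euc d → Euc d} {Lh : Fin m → Fin m → Euc d → Euc d}
    (hP : Measurable P) (hμ : Measurable μh) (hσ : ∀ j, Measurable (σh j))
    (hL : ∀ j₁ j₂, Measurable (Lh j₁ j₂)) (h : ℝ) (n : ℕ) :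
    Measurable fun p : ((Fin m × Fin N × Bool) → ℝ) × Euc d =>
      stepF N P μh σh Lh h n p.1 p.2 := by
  unfold stepF
  exact (measurable_stepHalf N hP hμ hσ hL h true n).comp
    (f := fun p : ((Fin m × Fin N × Bool) → ℝ) × Euc d =>
      (p.1, stepHalf N P μh σh Lh h false n p.1 p.2))
    (measurable_fst.prodMk (measurable_stepHalf N hP hμ hσ hL h false n))

/-- Distributional symmetry of the antithetic estimator: the pair
`(Y^f_n, Y^c_n)` has the same law as `(Y^a_n, Y^c_n)`, hence the antithetic
telescoping identity holds for every bounded measurable payoff. -/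
theorem antithetic_distributional_symmetry
    (d m : ℕ) (hd : 1 ≤ d) (hm : 1 ≤ m) (T : ℝ) (hT : 0 < T)
    (P μh : ℝ → Euc d → Euc d)
    (σh : ℝ → Fin m → Euc d → Euc d)
    (Lh : ℝ → Fin m → Fin m → Euc d → Euc d)
    (hPmeas : ∀ h : ℝ, 0 < h → Measurable (P h))
    (hμhmeas : ∀ h : ℝ, 0 < h → Measurable (μh h))
    (hσhmeas : ∀ h : ℝ, 0 < h → ∀ j, Measurable (σh h j))
    (hLhmeas : ∀ h : ℝ, 0 < h → ∀ j₁ j₂, Measurable (Lh h j₁ j₂)) :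
      ∀ N : ℕ, 0 < N →
      ∀ (Ω : Type) [MeasurableSpace Ω] (Pr : Measure Ω) [IsProbabilityMeasure Pr],
      ∀ X₀ : Ω → Euc d, Measurable X₀ →
      ∀ δW : Fin m × Fin N × Bool → Ω → ℝ,
        (∀ q, Measurable (δW q)) →
        iIndepFun δW Pr →
        (∀ q, Measure.map (δW q) Pr = gaussianReal 0 (T / N / 2).toNNReal) →
        IndepFun X₀ (fun ω (q : Fin m × Fin N × Bool) => δW q ω) Pr →
      ∀ Yc Yf Yfm Ya Yam : ℕ → Ω → Euc d,
        Yc 0 = X₀ → Yf 0 = X₀ → Ya 0 = X₀ →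
        (∀ (n : ℕ) (hn : n < N), ∀ ω, Yc (n + 1) ω
          = mmStep (P (T / N)) (μh (T / N)) (σh (T / N)) (Lh (T / N)) (T / N)
              (fun j => δW (j, ⟨n, hn⟩, false) ω + δW (j, ⟨n, hn⟩, true) ω) (Yc n ω)) →
        (∀ (n : ℕ) (hn : n < N), ∀ ω, Yfm n ω
          = mmStep (P (T / N / 2)) (μh (T / N / 2)) (σh (T / N / 2)) (Lh (T / N / 2))
              (T / N / 2) (fun j => δW (j, ⟨n, hn⟩, false) ω) (Yf n ω)) →
        (∀ (n : ℕ) (hn : n < N), ∀ ω, Yf (n + 1) ω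
          = mmStep (P (T / N / 2)) (μh (T / N / 2)) (σh (T / N / 2)) (Lh (T / N / 2))
              (T / N / 2) (fun j => δW (j, ⟨n, hn⟩, true) ω) (Yfm n ω)) →
        (∀ (n : ℕ) (hn : n < N), ∀ ω, Yam n ω
          = mmStep (P (T / N / 2)) (μh (T / N / 2)) (σh (T / N / 2)) (Lh (T / N / 2))
              (T / N / 2) (fun j => δW (j, ⟨n, hn⟩, true) ω) (Ya n ω)) →
        (∀ (n : ℕ) (hn : n < N), ∀ ω, Ya (n + 1) ω
          = mmStep (P (T / N / 2)) (μh (T / N / 2)) (σh (T / N / 2)) (Lh (T / N / 2))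
              (T / N / 2) (fun j => δW (j, ⟨n, hn⟩, false) ω) (Yam n ω)) →
        ∀ n : ℕ, n ≤ N →
          (Measure.map (fun ω => (Yf n ω, Yc n ω)) Pr
            = Measure.map (fun ω => (Ya n ω, Yc n ω)) Pr) ∧
          (∀ φ : Euc d → ℝ, Measurable φ → (∃ K : ℝ, ∀ x, |φ x| ≤ K) →
            (∫ ω, φ (Yf n ω) ∂Pr) = ∫ ω, φ (Ya n ω) ∂Pr ∧
            (∫ ω, (φ (Yf N ω) + φ (Ya N ω)) / 2 ∂Pr) = ∫ ω, φ (Yf N ω) ∂Pr) := by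
  intro N hN Ω _ Pr _ X₀ hX₀ δW hδWmeas hδWindep hδWlaw hIndep
  intro Yc Yf Yfm Ya Yam hYc0 hYf0 hYa0 hYcS hYfmS hYfS hYamS hYaS
  have hNpos : (0 : ℝ) < (N : ℝ) := by exact_mod_cast hN
  have hh1 : (0 : ℝ) < T / N := div_pos hT hNpos
  have hh2 : (0 : ℝ) < T / N / 2 := div_pos hh1 two_pos
  -- step functions
  set SC := stepC N (P (T / N)) (μh (T / N)) (σh (T / N)) (Lh (T / N)) (T / N) with hSCdef
  set SF := stepF N (P (T / N / 2)) (μh (T / N / 2)) (σh (T / N / 2)) (Lh (T / N / 2))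
    (T / N / 2) with hSFdef
  have hSCm : ∀ n, Measurable fun p : ((Fin m × Fin N × Bool) → ℝ) × Euc d =>
      SC n p.1 p.2 := fun n => by
    rw [hSCdef]
    exact measurable_stepC N (hPmeas _ hh1) (hμhmeas _ hh1) (hσhmeas _ hh1)
      (hLhmeas _ hh1) _ n
  have hSFm : ∀ n, Measurable fun p : ((Fin m × Fin N × Bool) → ℝ) × Euc d =>
      SF n p.1 p.2 := fun n => by
    rw [hSFdef]
    exact measurable_stepF N (hPmeas _ hh2) (hμhmeas _ hh2) (hσhmeas _ hh2)
      (hLhmeas _ hh2) _ n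
  -- pointwise representations
  have hYcW : ∀ n, n ≤ N → ∀ ω, Yc n ω = chain SC n (X₀ ω) (fun q => δW q ω) := by
    intro n
    induction n with
    | zero => intro _ ω; rw [hYc0]; rfl
    | succ n ih =>
      intro hn1 ω
      have hn : n < N := hn1
      rw [hYcS n hn ω, ih hn.le ω]
      simp only [chain, hSCdef, stepC, dif_pos hn]
  have hYfW : ∀ n, n ≤ N → ∀ ω, Yf n ω = chain SF n (X₀ ω) (fun q => δW q ω) := by
    intro n
    induction n with
    | zero => intro _ ω; rw [hYf0]; rfl
    | succ n ih =>
      intro hn1 ω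
      have hn : n < N := hn1
      rw [hYfS n hn ω, hYfmS n hn ω, ih hn.le ω]
      simp only [chain, hSFdef, stepF, stepHalf, dif_pos hn]
  have hYaW : ∀ n, n ≤ N → ∀ ω,
      Ya n ω = chain SF n (X₀ ω) (fun q => δW (flipBool m N q) ω) := by
    intro n
    induction n with
    | zero => intro _ ω; rw [hYa0]; rfl
    | succ n ih =>
      intro hn1 ω
      have hn : n < N := hn1
      rw [hYaS n hn ω, hYamS n hn ω, ih hn.le ω]
      simp only [chain, hSFdef, stepF, stepHalf, dif_pos hn, flipBool, Equiv.coe_fn_mk,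
        Bool.not_true, Bool.not_false]
  have hYcW' : ∀ n, n ≤ N → ∀ ω,
      Yc n ω = chain SC n (X₀ ω) (fun q => δW (flipBool m N q) ω) := by
    intro n
    induction n with
    | zero => intro _ ω; rw [hYc0]; rfl
    | succ n ih =>
      intro hn1 ω
      have hn : n < N := hn1
      rw [hYcS n hn ω, ih hn.le ω]
      simp only [chain, hSCdef, stepC, dif_pos hn, flipBool, Equiv.coe_fn_mk,
        Bool.not_true, Bool.not_false]
      have : (fun j => δW (j, (⟨n, hn⟩ : Fin N), false) ω + δW (j, ⟨n, hn⟩, true) ω)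
          = fun j => δW (j, (⟨n, hn⟩ : Fin N), true) ω + δW (j, ⟨n, hn⟩, false) ω :=
        funext fun j => add_comm _ _
      rw [this]
  -- laws of the driving noise
  have hν : IsProbabilityMeasure (gaussianReal 0 (T / N / 2).toNNReal) := by infer_instance
  have hWmeas : Measurable fun ω (q : Fin m × Fin N × Bool) => δW q ω :=
    measurable_pi_iff.2 fun q => hδWmeas q
  have hg : Measurable fun (w : (Fin m × Fin N × Bool) → ℝ) q => w (flipBool m N q) :=
    measurable_pi_iff.2 fun q => measurable_pi_apply _
  have hW'meas : Measurable fun ω (q : Fin m × Fin N × Bool) => δW (flipBool m N q) ω :=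
    measurable_pi_iff.2 fun q => hδWmeas _
  have hWlaw : Measure.map (fun ω (q : Fin m × Fin N × Bool) => δW q ω) Pr
      = Measure.pi (fun _ => gaussianReal 0 (T / N / 2).toNNReal) :=
    map_joint_eq_pi hδWmeas hδWindep hδWlaw
  have hW'law : Measure.map (fun ω (q : Fin m × Fin N × Bool) => δW (flipBool m N q) ω) Pr
      = Measure.pi (fun _ => gaussianReal 0 (T / N / 2).toNNReal) := by
    have hcomp : (fun ω (q : Fin m × Fin N × Bool) => δW (flipBool m N q) ω)
        = (fun (w : (Fin m × Fin N × Bool) → ℝ) q => w (flipBool m N q))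
          ∘ (fun ω q => δW q ω) := rfl
    rw [hcomp, ← Measure.map_map hg hWmeas, hWlaw, map_comp_equiv_pi]
  have hIndepW' : IndepFun X₀ (fun ω (q : Fin m × Fin N × Bool) => δW (flipBool m N q) ω) Pr := by
    have := hIndep.comp measurable_id hg
    exact this
  have hbase : Measure.map (fun ω => (X₀ ω, fun q => δW q ω)) Pr
      = Measure.map (fun ω => (X₀ ω, fun q => δW (flipBool m N q) ω)) Pr := by
    rw [(indepFun_iff_map_prod_eq_prod_map_map hX₀.aemeasurable hWmeas.aemeasurable).1 hIndep,
      (indepFun_iff_map_prod_eq_prod_map_map hX₀.aemeasurable hW'meas.aemeasurable).1 hIndepW',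
      hWlaw, hW'law]
  -- key law equality
  have hXW : Measurable fun ω => (X₀ ω, fun q => δW q ω) := hX₀.prodMk hWmeas
  have hXW' : Measurable fun ω => (X₀ ω, fun q => δW (flipBool m N q) ω) :=
    hX₀.prodMk hW'meas
  have key : ∀ k, k ≤ N → Measure.map (fun ω => (Yf k ω, Yc k ω)) Pr
      = Measure.map (fun ω => (Ya k ω, Yc k ω)) Pr := by
    intro k hk
    have hchainf := chain_measurable (fun n => hSFm n) k
    have hchainc := chain_measurable (fun n => hSCm n) k
    have hG : Measurable fun p : Euc d × ((Fin m × Fin N × Bool) → ℝ) =>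
        (chain SF k p.1 p.2, chain SC k p.1 p.2) := hchainf.prodMk hchainc
    have e1 : (fun ω => (Yf k ω, Yc k ω))
        = (fun p : Euc d × ((Fin m × Fin N × Bool) → ℝ) =>
            (chain SF k p.1 p.2, chain SC k p.1 p.2))
          ∘ (fun ω => (X₀ ω, fun q => δW q ω)) :=
      funext fun ω => by
        simp only [Function.comp_apply]; rw [hYfW k hk ω, hYcW k hk ω]
    have e2 : (fun ω => (Ya k ω, Yc k ω))
        = (fun p : Euc d × ((Fin m × Fin N × Bool) → ℝ) =>
            (chain SF k p.1 p.2, chain SC k p.1 p.2))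
          ∘ (fun ω => (X₀ ω, fun q => δW (flipBool m N q) ω)) :=
      funext fun ω => by
        simp only [Function.comp_apply]; rw [hYaW k hk ω, hYcW' k hk ω]
    rw [e1, e2, ← Measure.map_map hG hXW, ← Measure.map_map hG hXW', hbase]
  -- measurability of the processes
  have hYfmeas : ∀ k, k ≤ N → Measurable (Yf k) := by
    intro k hk
    have : Yf k = fun ω => chain SF k (X₀ ω) (fun q => δW q ω) := funext (hYfW k hk)
    rw [this]
    exact (chain_measurable (fun n => hSFm n) k).comp hXW
  have hYameas : ∀ k, k ≤ N → Measurable (Ya k) := by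
    intro k hk
    have : Ya k = fun ω => chain SF k (X₀ ω) (fun q => δW (flipBool m N q) ω) :=
      funext (hYaW k hk)
    rw [this]
    exact (chain_measurable (fun n => hSFm n) k).comp hXW'
  have hYcmeas : ∀ k, k ≤ N → Measurable (Yc k) := by
    intro k hk
    have : Yc k = fun ω => chain SC k (X₀ ω) (fun q => δW q ω) := funext (hYcW k hk)
    rw [this]
    exact (chain_measurable (fun n => hSCm n) k).comp hXW
  -- first marginal laws agree
  have hmap : ∀ k, k ≤ N → Measure.map (Yf k) Pr = Measure.map (Ya k) Pr := by
    intro k hk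
    have h1 := congrArg (fun μ => Measure.map Prod.fst μ) (key k hk)
    rw [Measure.map_map measurable_fst ((hYfmeas k hk).prodMk (hYcmeas k hk)),
      Measure.map_map measurable_fst ((hYameas k hk).prodMk (hYcmeas k hk))] at h1
    exact h1
  intro n hnN
  refine ⟨key n hnN, fun φ hφ hbd => ?_⟩
  obtain ⟨K, hK⟩ := hbd
  have hint : ∀ k, k ≤ N → (∫ ω, φ (Yf k ω) ∂Pr) = ∫ ω, φ (Ya k ω) ∂Pr := by
    intro k hk
    rw [← integral_map (hYfmeas k hk).aemeasurable hφ.aestronglyMeasurable,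
      ← integral_map (hYameas k hk).aemeasurable hφ.aestronglyMeasurable, hmap k hk]
  refine ⟨hint n hnN, ?_⟩
  have hintg : ∀ g : Ω → Euc d, Measurable g → Integrable (fun ω => φ (g ω)) Pr := by
    intro g hg
    refine ⟨(hφ.comp hg).aestronglyMeasurable, ?_⟩
    exact HasFiniteIntegral.of_bounded (C := K)
      (ae_of_all _ fun ω => by simpa [Real.norm_eq_abs] using hK (g ω))
  have h3 : (∫ ω, (φ (Yf N ω) + φ (Ya N ω)) / 2 ∂Pr)
      = ((∫ ω, φ (Yf N ω) ∂Pr) + ∫ ω, φ (Ya N ω) ∂Pr) / 2 := by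
    rw [integral_div, integral_add (hintg _ (hYfmeas N le_rfl)) (hintg _ (hYameas N le_rfl))]
  rw [h3, ← hint N le_rfl]
  ring
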